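/- arXiv:0907.0308 — 3 statements merged into one kernel-verified Lean document; each statement's English description precedes it below -/
import Mathlib

section
/- For every integer n with n ∉ {−1, 0, 1}, the Baumslag–Solitar group BS(1,n) is isomorphic to the semidirect product ℤ[1/n] ⋊ ℤ, where the generator of ℤ acts on the additive group ℤ[1/n] by multiplication by n (which is an automorphism of ℤ[1/n]); under this isomorphism the generator a corresponds to the element 1 ∈ ℤ[1/n] and the generator b corresponds to the generator of the ℤ-factor. -/
/-- `ℤ[1/n]`: the additive group of the subring of `ℚ` consisting of all rationals of the
form `z / n ^ k` with `z : ℤ` and `k : ℕ`. -/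
def zInvPow (n : ℤ) (hn : n ≠ 0) : AddSubgroup ℚ where
  carrier := {q : ℚ | ∃ z : ℤ, ∃ k : ℕ, q = z / n ^ k}
  zero_mem' := ⟨0, 0, by norm_num⟩
  add_mem' := by
    rintro a b ⟨z₁, k₁, rfl⟩ ⟨z₂, k₂, rfl⟩
    have hq : (n : ℚ) ≠ 0 := Int.cast_ne_zero.mpr hn
    refine ⟨z₁ * n ^ k₂ + z₂ * n ^ k₁, k₁ + k₂, ?_⟩
    push_cast
    rw [pow_add]
    field_simp
  neg_mem' := by
    rintro a ⟨z, k, rfl⟩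
    refine ⟨-z, k, ?_⟩
    push_cast
    rw [neg_div]

theorem one_mem_zInvPow (n : ℤ) (hn : n ≠ 0) : (1 : ℚ) ∈ zInvPow n hn :=
  ⟨1, 0, by norm_num⟩

/-- The Baumslag–Solitar relation set for `BS(1,n) = ⟨a, b ∣ b * a * b⁻¹ * a⁻ⁿ⟩`, with
`a := FreeGroup.of 0` and `b := FreeGroup.of 1`. -/
def bsRel (n : ℤ) : Set (FreeGroup (Fin 2)) :=
  {FreeGroup.of 1 * FreeGroup.of 0 * (FreeGroup.of 1)⁻¹ * (FreeGroup.of 0) ^ (-n)}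

namespace BSaux

variable (n : ℤ)

abbrev P (n : ℤ) := PresentedGroup (bsRel n)

def A : P n := PresentedGroup.of 0
def B : P n := PresentedGroup.of 1

lemma key : B n * A n * (B n)⁻¹ = (A n) ^ n := by
  have hmem : (FreeGroup.of 1 * FreeGroup.of 0 * (FreeGroup.of 1)⁻¹ *
      (FreeGroup.of 0) ^ (-n) : FreeGroup (Fin 2)) ∈
      Subgroup.normalClosure (bsRel n) :=
    Subgroup.subset_normalClosure (by simp [bsRel])
  have h1 : (QuotientGroup.mk (FreeGroup.of 1 * FreeGroup.of 0 * (FreeGroup.of 1)⁻¹ *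
      (FreeGroup.of 0) ^ (-n)) : P n) = 1 :=
    (QuotientGroup.eq_one_iff _).2 hmem
  have h2 : B n * A n * (B n)⁻¹ * (A n) ^ (-n) = 1 := h1
  have := mul_eq_one_iff_eq_inv.1 h2
  rw [this, zpow_neg, inv_inv]

lemma keyz (z : ℤ) : B n * (A n) ^ z * (B n)⁻¹ = (A n) ^ (n * z) := by
  have h : (MulAut.conj (B n)) ((A n) ^ z) = ((MulAut.conj (B n)) (A n)) ^ z := map_zpow _ _ _
  simpa [MulAut.conj_apply, key n, ← zpow_mul, mul_comm] using h

def C (z k : ℤ) : P n := (B n) ^ (-k) * (A n) ^ z * (B n) ^ k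

lemma C_add (u v k : ℤ) : C n (u + v) k = C n u k * C n v k := by
  simp only [C, zpow_add]
  group

lemma C_shift (z k : ℤ) : C n z k = C n (n * z) (k + 1) := by
  have h : (A n) ^ z = (B n)⁻¹ * (A n) ^ (n * z) * B n := by
    rw [← keyz n z]; group
  simp only [C]
  rw [h]
  have e1 : (-(k + 1)) = -k + -1 := by ring
  rw [e1, zpow_add, zpow_add]
  group

lemma C_shiftn (z k : ℤ) (j : ℕ) : C n z k = C n (n ^ j * z) (k + j) := by
  induction j with
  | zero => simp
  | succ j ih =>
    rw [ih, C_shift]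
    congr 1
    · ring
    · push_cast; ring

lemma C_eq_nat {z z' : ℤ} {K K' : ℕ} (h : z * n ^ K' = z' * n ^ K) :
    C n z K = C n z' K' := by
  rw [C_shiftn n z K K', C_shiftn n z' K' K]
  rw [show n ^ K' * z = n ^ K * z' by linarith [h, mul_comm z (n ^ K'), mul_comm z' (n ^ K)]]
  congr 1
  push_cast; ring

lemma C_eq (hn0 : n ≠ 0) {z z' k k' : ℤ}
    (h : (z : ℚ) / (n : ℚ) ^ k = (z' : ℚ) / (n : ℚ) ^ k') :
    C n z k = C n z' k' := by
  have hq : (n : ℚ) ≠ 0 := Int.cast_ne_zero.mpr hn0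
  set j : ℕ := k.natAbs + k'.natAbs with hj
  have hkj : 0 ≤ k + j := by simp only [hj]; omega
  have hk'j : 0 ≤ k' + j := by simp only [hj]; omega
  rw [C_shiftn n z k j, C_shiftn n z' k' j]
  set K : ℕ := (k + j).toNat with hK
  set K' : ℕ := (k' + j).toNat with hK'
  have hKe : (K : ℤ) = k + j := Int.toNat_of_nonneg hkj
  have hK'e : (K' : ℤ) = k' + j := Int.toNat_of_nonneg hk'j
  rw [← hKe, ← hK'e]
  apply C_eq_nat
  have hz : (z : ℚ) * (n : ℚ) ^ k' = (z' : ℚ) * (n : ℚ) ^ k := by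
    rw [div_eq_div_iff (zpow_ne_zero _ hq) (zpow_ne_zero _ hq)] at h
    exact h
  have : ((n ^ j * z * n ^ K' : ℤ) : ℚ) = ((n ^ j * z' * n ^ K : ℤ) : ℚ) := by
    push_cast
    rw [← zpow_natCast (n : ℚ) K, ← zpow_natCast (n : ℚ) K', hKe, hK'e,
      zpow_add₀ hq, zpow_add₀ hq]
    calc (n:ℚ) ^ j * z * ((n:ℚ) ^ k' * (n:ℚ) ^ (j:ℤ))
        = ((z:ℚ) * (n:ℚ) ^ k') * ((n:ℚ) ^ j * (n:ℚ) ^ (j:ℤ)) := by ring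
      _ = ((z':ℚ) * (n:ℚ) ^ k) * ((n:ℚ) ^ j * (n:ℚ) ^ (j:ℤ)) := by rw [hz]
      _ = (n:ℚ) ^ j * z' * ((n:ℚ) ^ k * (n:ℚ) ^ (j:ℤ)) := by ring
  exact_mod_cast this

end BSaux
namespace BSaux

variable {n : ℤ} (hn0 : n ≠ 0)

noncomputable def F (q : zInvPow n hn0) : P n :=
  C n q.2.choose q.2.choose_spec.choose

lemma F_specZ (q : zInvPow n hn0) {z k : ℤ}
    (h : (q : ℚ) = (z : ℚ) / (n : ℚ) ^ k) : F hn0 q = C n z k := by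
  have h0 : (q : ℚ) = (q.2.choose : ℚ) / (n : ℚ) ^ q.2.choose_spec.choose :=
    q.2.choose_spec.choose_spec
  apply C_eq n hn0
  rw [← h, zpow_natCast]
  push_cast at h0 ⊢
  exact h0.symm

lemma F_spec (q : zInvPow n hn0) {z : ℤ} {k : ℕ}
    (h : (q : ℚ) = (z : ℚ) / (n : ℚ) ^ k) : F hn0 q = C n z k := by
  apply F_specZ hn0 q
  rw [h, zpow_natCast]

lemma F_add (x y : zInvPow n hn0) : F hn0 (x + y) = F hn0 x * F hn0 y := by
  have hq : (n : ℚ) ≠ 0 := Int.cast_ne_zero.mpr hn0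
  obtain ⟨z₁, k₁, h₁⟩ := x.2
  obtain ⟨z₂, k₂, h₂⟩ := y.2
  have hx : F hn0 x = C n z₁ k₁ := F_spec hn0 x (by exact_mod_cast h₁)
  have hy : F hn0 y = C n z₂ k₂ := F_spec hn0 y (by exact_mod_cast h₂)
  have hs : F hn0 (x + y) = C n (z₁ * n ^ k₂ + z₂ * n ^ k₁) (k₁ + k₂) := by
    apply F_spec hn0 (x + y)
    have : ((x + y : zInvPow n hn0) : ℚ) = (x : ℚ) + (y : ℚ) := rfl
    rw [this, h₁, h₂]
    push_cast
    rw [pow_add]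
    field_simp
  rw [hs, hx, hy, C_add, C_shiftn n z₁ k₁ k₂, C_shiftn n z₂ k₂ k₁]
  congr 2
  · ring
  · ring
  · push_cast; ring

noncomputable def f₁ : Multiplicative (zInvPow n hn0) →* P n :=
  MonoidHom.mk' (fun x => F hn0 x.toAdd) (fun x y => F_add hn0 x.toAdd y.toAdd)

lemma f₁_apply (x : zInvPow n hn0) : f₁ hn0 (Multiplicative.ofAdd x) = F hn0 x := rfl

end BSaux
open BSaux Multiplicative SemidirectProduct

/-- For every integer `n ∉ {-1, 0, 1}`, the Baumslag–Solitar group `BS(1,n)` is isomorphic to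
the semidirect product `ℤ[1/n] ⋊ ℤ`, where the generator of `ℤ` acts on the additive group
`ℤ[1/n]` by multiplication by `n`; under this isomorphism the generator `a` corresponds to
`1 ∈ ℤ[1/n]` and the generator `b` corresponds to the generator of the `ℤ`-factor. -/
theorem baumslagSolitar_iso_semidirectProduct (n : ℤ)
    (hn : n ≠ -1 ∧ n ≠ 0 ∧ n ≠ 1)
    (φ : Multiplicative ℤ →* MulAut (Multiplicative (zInvPow n hn.2.1)))
    (hφ : ∀ x : zInvPow n hn.2.1,
      ((Multiplicative.toAdd (φ (Multiplicative.ofAdd (1 : ℤ))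
        (Multiplicative.ofAdd x)) : zInvPow n hn.2.1) : ℚ) = (n : ℚ) * (x : ℚ)) :
    ∃ e : PresentedGroup (bsRel n) ≃*
        SemidirectProduct (Multiplicative (zInvPow n hn.2.1)) (Multiplicative ℤ) φ,
      e (PresentedGroup.of 0) =
        SemidirectProduct.inl (Multiplicative.ofAdd ⟨1, one_mem_zInvPow n hn.2.1⟩) ∧
      e (PresentedGroup.of 1) =
        SemidirectProduct.inr (Multiplicative.ofAdd (1 : ℤ)) := by
  classical
  have hn0 : n ≠ 0 := hn.2.1
  have hq : (n : ℚ) ≠ 0 := Int.cast_ne_zero.mpr hn0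
  set u : Multiplicative (zInvPow n hn.2.1) :=
    Multiplicative.ofAdd ⟨1, one_mem_zInvPow n hn.2.1⟩ with hu
  -- the action of `ofAdd m` multiplies by `n ^ m`
  have hφall : ∀ (m : ℤ) (x : zInvPow n hn.2.1),
      ((Multiplicative.toAdd (φ (Multiplicative.ofAdd m) (Multiplicative.ofAdd x)) :
        zInvPow n hn.2.1) : ℚ) = (n : ℚ) ^ m * (x : ℚ) := by
    have hneg : ∀ x : zInvPow n hn.2.1,
        ((Multiplicative.toAdd (φ (Multiplicative.ofAdd (-1 : ℤ))
          (Multiplicative.ofAdd x)) : zInvPow n hn.2.1) : ℚ) = (x : ℚ) / n := by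
      intro x
      have h1 := hφ (Multiplicative.toAdd (φ (Multiplicative.ofAdd (-1 : ℤ))
        (Multiplicative.ofAdd x)))
      rw [ofAdd_toAdd] at h1
      have h2 : φ (Multiplicative.ofAdd (1 : ℤ)) (φ (Multiplicative.ofAdd (-1 : ℤ))
          (Multiplicative.ofAdd x)) = Multiplicative.ofAdd x := by
        rw [← MulAut.mul_apply, ← map_mul, ← ofAdd_add]
        norm_num
      rw [h2] at h1
      rw [toAdd_ofAdd] at h1
      rw [eq_div_iff hq]
      linear_combination -h1
    intro m x
    induction m using Int.induction_on with
    | zero => simp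
    | succ m ih =>
      have h3 : Multiplicative.ofAdd ((m : ℤ) + 1) =
          Multiplicative.ofAdd (1 : ℤ) * Multiplicative.ofAdd (m : ℤ) := by
        rw [← ofAdd_add]; ring_nf
      rw [h3, map_mul, MulAut.mul_apply]
      have h1 := hφ (Multiplicative.toAdd (φ (Multiplicative.ofAdd (m : ℤ))
        (Multiplicative.ofAdd x)))
      rw [ofAdd_toAdd] at h1
      rw [h1, ih, zpow_add₀ hq, zpow_one]; ring
    | pred m ih =>
      have h3 : Multiplicative.ofAdd (-(m : ℤ) - 1) =
          Multiplicative.ofAdd (-1 : ℤ) * Multiplicative.ofAdd (-(m : ℤ)) := by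
        rw [← ofAdd_add]; ring_nf
      rw [h3, map_mul, MulAut.mul_apply,
        show φ (Multiplicative.ofAdd (-(m : ℤ))) (Multiplicative.ofAdd x) =
          Multiplicative.ofAdd (Multiplicative.toAdd
            (φ (Multiplicative.ofAdd (-(m : ℤ))) (Multiplicative.ofAdd x))) from
          (ofAdd_toAdd _).symm,
        hneg, ih, zpow_sub₀ hq, zpow_one]
      ring
  -- the homomorphism out of the semidirect product
  set f₂ : Multiplicative ℤ →* P n := zpowersHom (P n) (B n) with hf₂
  have compat : ∀ g : Multiplicative ℤ,
      (f₁ hn.2.1).comp (φ g).toMonoidHom =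
        (MulAut.conj (f₂ g)).toMonoidHom.comp (f₁ hn.2.1) := by
    intro g
    refine MonoidHom.ext fun x => ?_
    simp only [MonoidHom.comp_apply, MulEquiv.coe_toMonoidHom, MulAut.conj_apply, hf₂,
      zpowersHom_apply]
    set m : ℤ := Multiplicative.toAdd g with hm
    obtain ⟨z, k, hzk⟩ := (Multiplicative.toAdd x).2
    have hx : f₁ hn.2.1 x = C n z k := by
      rw [show x = Multiplicative.ofAdd (Multiplicative.toAdd x) from (ofAdd_toAdd x).symm,
        f₁_apply]
      exact F_spec hn.2.1 _ (by exact_mod_cast hzk)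
    have hgx : f₁ hn.2.1 (φ g x) = C n z ((k : ℤ) - m) := by
      rw [show φ g x = Multiplicative.ofAdd (Multiplicative.toAdd (φ g x)) from
        (ofAdd_toAdd _).symm, f₁_apply]
      apply F_specZ hn.2.1
      have h1 : ((Multiplicative.toAdd (φ g x) : zInvPow n hn.2.1) : ℚ)
          = (n : ℚ) ^ m * ((Multiplicative.toAdd x : zInvPow n hn.2.1) : ℚ) := by
        have := hφall m (Multiplicative.toAdd x)
        rw [ofAdd_toAdd] at this
        rw [hm, ofAdd_toAdd] at this
        exact this
      rw [h1, hzk]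
      rw [zpow_sub₀ hq, zpow_natCast]
      push_cast
      field_simp
    rw [hgx, hx]
    show C n z ((k : ℤ) - m) = B n ^ m * C n z (k : ℤ) * (B n ^ m)⁻¹
    simp only [C]
    group
  set ψ : SemidirectProduct (Multiplicative (zInvPow n hn.2.1)) (Multiplicative ℤ) φ →* P n :=
    SemidirectProduct.lift (f₁ hn.2.1) f₂ compat with hψ
  -- the homomorphism out of the presented group
  set fmap : Fin 2 → SemidirectProduct (Multiplicative (zInvPow n hn.2.1)) (Multiplicative ℤ) φ :=
    fun i => if i = 0 then SemidirectProduct.inl u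
      else SemidirectProduct.inr (Multiplicative.ofAdd (1 : ℤ)) with hfmap
  have hun : φ (Multiplicative.ofAdd (1 : ℤ)) u = u ^ n := by
    apply Multiplicative.toAdd.injective
    apply Subtype.ext
    have h1 := hφ ⟨1, one_mem_zInvPow n hn.2.1⟩
    rw [← hu] at h1
    rw [h1, toAdd_zpow]
    push_cast [hu]
    simp
  have hrel : ∀ r ∈ bsRel n, FreeGroup.lift fmap r = 1 := by
    intro r hr
    rw [bsRel, Set.mem_singleton_iff] at hr
    subst hr
    have h0 : fmap 0 = SemidirectProduct.inl u := by simp [hfmap]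
    have h1 : fmap 1 = SemidirectProduct.inr (Multiplicative.ofAdd (1 : ℤ)) := by
      simp [hfmap]
    simp only [map_mul, map_inv, map_zpow, FreeGroup.lift_apply_of, h0, h1]
    rw [show (SemidirectProduct.inr (φ := φ) (Multiplicative.ofAdd (1 : ℤ)))⁻¹ =
        SemidirectProduct.inr ((Multiplicative.ofAdd (1 : ℤ))⁻¹) from (map_inv _ _).symm,
      ← SemidirectProduct.inl_aut,
      show (SemidirectProduct.inl (φ := φ) u) ^ (-n) = SemidirectProduct.inl (u ^ (-n)) from
        (map_zpow _ _ _).symm,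
      ← map_mul, hun, ← zpow_add]
    simp
  set θ : P n →* SemidirectProduct (Multiplicative (zInvPow n hn.2.1)) (Multiplicative ℤ) φ :=
    PresentedGroup.toGroup hrel with hθ
  have hθ0 : θ (PresentedGroup.of 0) = SemidirectProduct.inl u := by
    rw [hθ, PresentedGroup.toGroup.of]; simp [hfmap]
  have hθ1 : θ (PresentedGroup.of 1) = SemidirectProduct.inr (Multiplicative.ofAdd (1 : ℤ)) := by
    rw [hθ, PresentedGroup.toGroup.of]; simp [hfmap]
  -- ψ ∘ θ = id
  have h2 : ψ.comp θ = MonoidHom.id (P n) := by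
    apply PresentedGroup.ext
    intro i
    fin_cases i
    · show ψ (θ (PresentedGroup.of 0)) = PresentedGroup.of 0
      rw [hθ0]
      rw [hψ, SemidirectProduct.lift_inl, hu, f₁_apply]
      rw [F_spec hn.2.1 _ (show ((⟨1, one_mem_zInvPow n hn.2.1⟩ : zInvPow n hn.2.1) : ℚ)
        = ((1 : ℤ) : ℚ) / (n : ℚ) ^ (0 : ℕ) by norm_num)]
      simp [C, A]
    · show ψ (θ (PresentedGroup.of 1)) = PresentedGroup.of 1
      rw [hθ1, hψ, SemidirectProduct.lift_inr, hf₂, zpowersHom_apply, toAdd_ofAdd, zpow_one]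
      rfl
  -- θ ∘ ψ = id
  have h1 : θ.comp ψ = MonoidHom.id _ := by
    apply SemidirectProduct.hom_ext
    · refine MonoidHom.ext fun x => ?_
      simp only [MonoidHom.comp_apply, MonoidHom.id_apply]
      rw [hψ, SemidirectProduct.lift_inl]
      obtain ⟨z, k, hzk⟩ := (Multiplicative.toAdd x).2
      have hx : f₁ hn.2.1 x = C n z k := by
        rw [show x = Multiplicative.ofAdd (Multiplicative.toAdd x) from (ofAdd_toAdd x).symm,
          f₁_apply]
        exact F_spec hn.2.1 _ (by exact_mod_cast hzk)
      rw [hx]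
      show θ (B n ^ (-(k : ℤ)) * A n ^ z * B n ^ (k : ℤ)) = _
      rw [map_mul, map_mul, map_zpow, map_zpow, map_zpow]
      rw [show θ (B n) = SemidirectProduct.inr (Multiplicative.ofAdd (1 : ℤ)) from hθ1,
        show θ (A n) = SemidirectProduct.inl u from hθ0]
      have einr : ∀ e : ℤ, (SemidirectProduct.inr (φ := φ) (Multiplicative.ofAdd (1 : ℤ))) ^ e
          = SemidirectProduct.inr (Multiplicative.ofAdd e) := by
        intro e
        rw [← map_zpow (SemidirectProduct.inr : Multiplicative ℤ →* _), ← ofAdd_zsmul,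
          smul_eq_mul, mul_one]
      have einl : (SemidirectProduct.inl (φ := φ) u) ^ z = SemidirectProduct.inl (u ^ z) :=
        (map_zpow _ _ _).symm
      rw [einr, einr, einl]
      rw [show Multiplicative.ofAdd ((k : ℤ)) = (Multiplicative.ofAdd (-(k : ℤ)))⁻¹ by
        rw [← ofAdd_neg, neg_neg], ← SemidirectProduct.inl_aut]
      congr 1
      apply Multiplicative.toAdd.injective
      apply Subtype.ext
      have h4 := hφall (-(k : ℤ)) (Multiplicative.toAdd (u ^ z))
      rw [ofAdd_toAdd] at h4
      rw [h4, toAdd_zpow, hu, toAdd_ofAdd]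
      push_cast
      rw [hzk]
      rw [zpow_neg, zpow_natCast]
      push_cast
      field_simp
      simp
    · apply MonoidHom.ext_mint
      simp only [MonoidHom.comp_apply, MonoidHom.id_apply]
      rw [hψ, SemidirectProduct.lift_inr, hf₂, zpowersHom_apply, toAdd_ofAdd, zpow_one]
      exact hθ1
  refine ⟨MonoidHom.toMulEquiv θ ψ h2 h1, ?_, ?_⟩
  · show θ (PresentedGroup.of 0) = _
    rw [hθ0, hu]
  · show θ (PresentedGroup.of 1) = _
    rw [hθ1]
end

section
/- For every integer n with |n| ≥ 2, the Baumslag–Solitar group BS(1,n) is not polycyclic; indeed, the kernel of the homomorphism BS(1,n) → ℤ sending a ↦ 0 and b ↦ 1 is a subgroup of BS(1,n) that is not finitely generated, whereas every subgroup of a polycyclic group is finitely generated. -/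
/-- A group `G` is polycyclic if there is a finite chain of subgroups
`1 = H₀ ≤ H₁ ≤ ⋯ ≤ Hₘ = G` with each `Hᵢ` normal in `Hᵢ₊₁` and each quotient `Hᵢ₊₁/Hᵢ`
cyclic. -/
def IsPolycyclic (G : Type*) [Group G] : Prop :=
  ∃ (m : ℕ) (H : Fin (m + 1) → Subgroup G),
    H 0 = ⊥ ∧ H (Fin.last m) = ⊤ ∧
    ∀ i : Fin m, H i.castSucc ≤ H i.succ ∧
      ∃ hnorm : ((H i.castSucc).subgroupOf (H i.succ)).Normal,
        haveI := hnorm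
        IsCyclic ((H i.succ) ⧸ (H i.castSucc).subgroupOf (H i.succ))

open Subgroup


lemma fg_top_of_ker_range {G H : Type*} [Group G] [Group H] (f : G →* H)
    (hk : f.ker.FG) (hr : f.range.FG) : Group.FG G := by
  obtain ⟨T, hT⟩ := hr
  obtain ⟨K, hK⟩ := hk
  have hTsub : (T : Set H) ⊆ f.range := hT ▸ subset_closure
  choose g hg using fun t : T => hTsub t.2
  rw [Group.fg_iff]
  refine ⟨Set.range g ∪ ↑K, ?_, (Set.finite_range g).union K.finite_toSet⟩
  rw [eq_top_iff]
  intro x _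
  have himg : f '' Set.range g = (T : Set H) := by
    ext y
    constructor
    · rintro ⟨_, ⟨t, rfl⟩, rfl⟩; rw [hg]; exact t.2
    · intro hy; exact ⟨g ⟨y, hy⟩, ⟨⟨y, hy⟩, rfl⟩, hg _⟩
  have hx : f x ∈ (closure (Set.range g)).map f := by
    rw [MonoidHom.map_closure, himg, hT]
    exact MonoidHom.mem_range.2 ⟨x, rfl⟩
  obtain ⟨w, hw, hwx⟩ := hx
  have h1 : x * w⁻¹ ∈ closure (Set.range g ∪ ↑K) := by
    apply Subgroup.closure_mono Set.subset_union_right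
    rw [hK]
    simp [MonoidHom.mem_ker, hwx]
  have h2 : w ∈ closure (Set.range g ∪ ↑K) :=
    Subgroup.closure_mono Set.subset_union_left hw
  simpa using mul_mem h1 h2

lemma fg_subgroupOf {G : Type*} [Group G] {M K : Subgroup G} (h : M ≤ K) (hM : M.FG) :
    (M.subgroupOf K).FG := by
  rw [← Group.fg_iff_subgroup_fg] at hM ⊢
  exact Group.fg_of_surjective (f := (subgroupOfEquivOfLe h).symm.toMonoidHom)
    (subgroupOfEquivOfLe h).symm.surjective

lemma fg_of_isCyclic {G : Type*} [Group G] (H : Subgroup G) [IsCyclic H] : H.FG := by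
  rw [← Group.fg_iff_subgroup_fg]
  obtain ⟨g, hg⟩ := IsCyclic.exists_generator (α := H)
  exact ⟨⟨{g}, top_unique fun x _ => by simpa [Subgroup.zpowers_eq_closure] using hg x⟩⟩

lemma polycyclic_fg {G : Type*} [Group G] (h : IsPolycyclic G) (K : Subgroup G) : K.FG := by
  obtain ⟨m, H, h0, hlast, hstep⟩ := h
  suffices hgen : ∀ i : ℕ, ∀ hi : i < m + 1, ∀ K : Subgroup G, K ≤ H ⟨i, hi⟩ → K.FG by
    refine hgen m m.lt_succ_self K ?_
    rw [show (⟨m, m.lt_succ_self⟩ : Fin (m+1)) = Fin.last m from rfl, hlast]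
    exact le_top
  intro i
  induction i with
  | zero =>
    intro hi K hK
    have hbot : H ⟨0, hi⟩ = ⊥ := h0
    have : K = ⊥ := le_bot_iff.1 (hbot ▸ hK)
    exact ⟨∅, by simp [this]⟩
  | succ i ih =>
    intro hi K hK
    set j : Fin m := ⟨i, by omega⟩ with hj
    obtain ⟨hle, hnorm, hcyc⟩ := hstep j
    haveI := hnorm
    haveI : IsCyclic ((H j.succ) ⧸ (H j.castSucc).subgroupOf (H j.succ)) := hcyc
    have hKB : K ≤ H j.succ := hK
    set f : K →* (H j.succ) ⧸ (H j.castSucc).subgroupOf (H j.succ) :=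
      (QuotientGroup.mk' _).comp (Subgroup.inclusion hKB) with hf
    have hker : f.ker = ((H j.castSucc) ⊓ K).subgroupOf K := by
      ext x
      simp only [hf, MonoidHom.mem_ker, MonoidHom.comp_apply, QuotientGroup.mk'_apply,
        QuotientGroup.eq_one_iff, Subgroup.mem_subgroupOf, Subgroup.mem_inf]
      exact ⟨fun hx => ⟨hx, x.2⟩, fun hx => hx.1⟩
    have hkerfg : f.ker.FG := by
      rw [hker]
      exact fg_subgroupOf inf_le_right (ih (by omega) _ inf_le_left)
    have hrangefg : f.range.FG := fg_of_isCyclic _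
    rw [← Group.fg_iff_subgroup_fg]
    exact fg_top_of_ker_range f hkerfg hrangefg


open Multiplicative SemidirectProduct



/-- Multiplication by a unit, as an automorphism of `Multiplicative ℚ`. -/
def qAut : ℚˣ →* MulAut (Multiplicative ℚ) where
  toFun u :=
    { toFun := fun x => ofAdd ((u : ℚ) * x.toAdd)
      invFun := fun x => ofAdd (((u⁻¹ : ℚˣ) : ℚ) * x.toAdd)
      left_inv := fun x => by
        simp [← mul_assoc, Units.inv_mul]
      right_inv := fun x => by
        simp [← mul_assoc, Units.mul_inv]
      map_mul' := fun x y => by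
        simp [mul_add, ofAdd_add] }
  map_one' := by ext x; simp
  map_mul' u v := by ext x; simp [mul_assoc]

@[simp] lemma qAut_apply (u : ℚˣ) (q : ℚ) : qAut u (ofAdd q) = ofAdd ((u : ℚ) * q) := rfl

/-- The action of `ℤ` on `ℚ` by multiplication by powers of `u`. -/
def qAct (u : ℚˣ) : Multiplicative ℤ →* MulAut (Multiplicative ℚ) :=
  zpowersHom _ (qAut u)

lemma qAct_apply (u : ℚˣ) (k : ℤ) (q : ℚ) :
    qAct u (ofAdd k) (ofAdd q) = ofAdd (((u ^ k : ℚˣ) : ℚ) * q) := by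
  have : qAct u (ofAdd k) = qAut (u ^ k) := by
    simp [qAct, zpowersHom_apply, ← map_zpow]
  rw [this, qAut_apply]

/-- The target group `ℚ ⋊ ℤ`. -/
abbrev GT (u : ℚˣ) := SemidirectProduct (Multiplicative ℚ) (Multiplicative ℤ) (qAct u)

def bsGen (u : ℚˣ) : Fin 2 → GT u :=
  ![inl (ofAdd (1 : ℚ)), inr (ofAdd (1 : ℤ))]

lemma bsRel_check (n : ℤ) (hn : (n : ℚ) ≠ 0) :
    ∀ r ∈ bsRel n, FreeGroup.lift (bsGen (Units.mk0 (n : ℚ) hn)) r = 1 := by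
  intro r hr
  set u := Units.mk0 (n : ℚ) hn
  rcases hr with rfl
  rw [map_mul, map_mul, map_mul, map_inv, map_zpow]
  simp only [FreeGroup.lift_apply_of, bsGen, Matrix.cons_val_one, Matrix.head_cons,
    Matrix.cons_val_zero]
  rw [← map_inv, ← inl_aut, ← map_zpow, ← map_mul]
  have h1 : qAct u (ofAdd (1:ℤ)) (ofAdd (1:ℚ)) = ofAdd (n : ℚ) := by
    rw [qAct_apply]; norm_num [u]
  rw [h1]
  have h2 : (ofAdd (1:ℚ)) ^ (-n) = ofAdd (-n : ℚ) := by
    rw [← ofAdd_zsmul]; norm_num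
  rw [h2, ← ofAdd_add]
  norm_num

noncomputable def bsHom (n : ℤ) (hn : (n : ℚ) ≠ 0) :
    PresentedGroup (bsRel n) →* GT (Units.mk0 (n : ℚ) hn) :=
  PresentedGroup.toGroup (bsRel_check n hn)

noncomputable def bsPhi (n : ℤ) (hn : (n : ℚ) ≠ 0) :
    PresentedGroup (bsRel n) →* Multiplicative ℤ :=
  rightHom.comp (bsHom n hn)

@[simp] lemma bsHom_of0 (n : ℤ) (hn : (n : ℚ) ≠ 0) :
    bsHom n hn (PresentedGroup.of 0) = inl (ofAdd (1 : ℚ)) := by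
  simp [bsHom, PresentedGroup.toGroup.of, bsGen]

@[simp] lemma bsHom_of1 (n : ℤ) (hn : (n : ℚ) ≠ 0) :
    bsHom n hn (PresentedGroup.of 1) = inr (ofAdd (1 : ℤ)) := by
  simp [bsHom, PresentedGroup.toGroup.of, bsGen]

lemma bsHom_gk (n : ℤ) (hn : (n : ℚ) ≠ 0) (k : ℤ) :
    bsHom n hn ((PresentedGroup.of 1) ^ (-k) * PresentedGroup.of 0 *
      (PresentedGroup.of 1) ^ k) = inl (ofAdd ((n : ℚ) ^ (-k))) := by
  set u := Units.mk0 (n : ℚ) hn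
  have h1 : (inr (ofAdd (1:ℤ)) : GT u) ^ k = inr (ofAdd k) := by
    rw [← map_zpow, ← ofAdd_zsmul]; norm_num
  have h2 : (inr ((ofAdd k)⁻¹) : GT u) = inr (ofAdd (-k)) := by
    rw [← ofAdd_neg]
  have h1' : (inr (ofAdd (1:ℤ)) : GT u) ^ (-k) = inr (ofAdd (-k)) := by
    rw [← map_zpow, ← ofAdd_zsmul]; norm_num
  rw [map_mul, map_mul, map_zpow, map_zpow, bsHom_of0, bsHom_of1, h1, h1', ← h2,
    ← inl_aut_inv]
  congr 1
  have : (qAct u (ofAdd k))⁻¹ = qAct u (ofAdd (-k)) := by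
    rw [← map_inv, ← ofAdd_neg]
  rw [this, qAct_apply]
  norm_num [u]

lemma bs_ker_not_fg (n : ℤ) (hn : 2 ≤ |n|) (hn0 : (n : ℚ) ≠ 0) :
    ¬ (bsPhi n hn0).ker.FG := by
  rintro ⟨S, hS⟩
  set u := Units.mk0 (n : ℚ) hn0 with hu
  set ψ := bsHom n hn0 with hψ
  have hright : ∀ g ∈ (bsPhi n hn0).ker, (ψ g).right = 1 := fun g hg => hg
  set W : Subgroup (Multiplicative ℚ) :=
    Subgroup.closure ((fun g => (ψ g).left) '' ↑S) with hW
  have hmem : ∀ g ∈ (bsPhi n hn0).ker, (ψ g).left ∈ W := by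
    intro g hg
    rw [← hS] at hg
    induction hg using Subgroup.closure_induction with
    | mem x hx => exact Subgroup.subset_closure ⟨x, hx, rfl⟩
    | one => simpa using one_mem W
    | mul x y hx hy ihx ihy =>
      have hx' : (ψ x).right = 1 := hright x (hS ▸ hx)
      rw [map_mul, mul_left, hx', map_one]
      simpa using mul_mem ihx ihy
    | inv x hx ihx =>
      have hx' : (ψ x).right = 1 := hright x (hS ▸ hx)
      rw [map_inv, inv_left, hx', inv_one, map_one]
      simpa using inv_mem ihx
  set F := S.image (fun g => ((ψ g).left).toAdd) with hF
  set D : ℕ := ∏ q ∈ F, q.den with hD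
  have hDpos : 0 < D := Finset.prod_pos (fun q _ => q.pos)
  have hDQ : (D : ℚ) ≠ 0 := by positivity
  set T := Subgroup.zpowers (ofAdd ((D : ℚ)⁻¹)) with hT
  have hWT : W ≤ T := by
    rw [hW, Subgroup.closure_le]
    rintro x ⟨g, hgS, rfl⟩
    set q : ℚ := ((ψ g).left).toAdd with hq
    have hden : q.den ∣ D :=
      Finset.dvd_prod_of_mem _ (Finset.mem_image_of_mem _ hgS)
    obtain ⟨c, hc⟩ := hden
    refine Subgroup.mem_zpowers_iff.2 ⟨q.num * c, ?_⟩
    show (ofAdd ((D : ℚ)⁻¹)) ^ ((q.num * c : ℤ)) = (ψ g).left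
    rw [← ofAdd_toAdd ((ψ g).left), ← ofAdd_zsmul]
    congr 1
    have hc' : (D : ℚ) = (q.den : ℚ) * c := by exact_mod_cast hc
    have hcne : (c : ℚ) ≠ 0 := by
      intro h0
      rw [hc', h0, mul_zero] at hDQ
      exact hDQ rfl
    rw [← hq]
    have hdq : (q.den : ℚ) ≠ 0 := by exact_mod_cast q.den_ne_zero
    rw [zsmul_eq_mul, hc']
    push_cast
    rw [mul_inv,
      show ((q.num:ℚ)) * (c:ℚ) * ((q.den:ℚ)⁻¹ * (c:ℚ)⁻¹)
          = ((q.num:ℚ)/(q.den:ℚ)) * ((c:ℚ) * (c:ℚ)⁻¹) by ring,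
      mul_inv_cancel₀ hcne, Rat.num_div_den, mul_one]
  -- the element b^(-D) a b^D lies in the kernel
  set k : ℤ := (D : ℤ) with hk
  set gk : PresentedGroup (bsRel n) :=
    (PresentedGroup.of 1) ^ (-k) * PresentedGroup.of 0 * (PresentedGroup.of 1) ^ k with hgk
  have hgker : gk ∈ (bsPhi n hn0).ker := by
    show rightHom (ψ gk) = 1
    rw [hψ, hgk, bsHom_gk n hn0 k, rightHom_inl]
  have hleft : (ψ gk).left = ofAdd ((n : ℚ) ^ (-k)) := by
    rw [hψ, hgk, bsHom_gk n hn0 k, left_inl]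
  have hmemT : ofAdd ((n : ℚ) ^ (-k)) ∈ T := hWT (hleft ▸ hmem gk hgker)
  obtain ⟨m, hm⟩ := Subgroup.mem_zpowers_iff.1 hmemT
  rw [← ofAdd_zsmul] at hm
  have hm' : (m : ℚ) * (D : ℚ)⁻¹ = (n : ℚ) ^ (-k) := by
    have h := Multiplicative.ofAdd.injective hm
    rwa [zsmul_eq_mul] at h
  have hmne : m ≠ 0 := by
    intro h0
    rw [h0, Int.cast_zero, zero_mul] at hm'
    exact zpow_ne_zero _ hn0 hm'.symm
  have habs : (1:ℚ) ≤ |(m : ℚ)| := by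
    rw [← Int.cast_abs]
    exact_mod_cast Int.one_le_abs hmne
  have hnabs : (2:ℚ) ≤ |(n:ℚ)| := by
    rw [← Int.cast_abs]
    exact_mod_cast hn
  have hmk : (m:ℚ) * (n:ℚ) ^ k = D := by
    rw [zpow_neg] at hm'
    have hnk0 : (n:ℚ) ^ k ≠ 0 := zpow_ne_zero _ hn0
    field_simp at hm'
    linarith [hm']
  have hmk' : (m:ℚ) * (n:ℚ) ^ (D:ℕ) = (D:ℚ) := by
    rw [← zpow_natCast (n:ℚ) D, ← hk]; exact hmk
  have hmabs : |(m:ℚ)| * |(n:ℚ)| ^ (D:ℕ) = (D:ℚ) := by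
    have := congrArg abs hmk'
    rwa [abs_mul, abs_pow, abs_of_nonneg (by positivity : (0:ℚ) ≤ (D:ℚ))] at this
  have hpos : (0:ℚ) < |(n:ℚ)| ^ D := by positivity
  have hge : |(n:ℚ)| ^ D ≤ (D:ℚ) := by
    calc |(n:ℚ)| ^ D = 1 * |(n:ℚ)| ^ D := (one_mul _).symm
    _ ≤ |(m:ℚ)| * |(n:ℚ)| ^ D := by nlinarith
    _ = (D:ℚ) := hmabs
  have h2D : (2:ℚ) ^ D ≤ |(n:ℚ)| ^ D := pow_le_pow_left₀ (by norm_num) hnabs D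
  have hlt : (D:ℚ) < 2 ^ D := by exact_mod_cast (Nat.lt_two_pow_self (n := D))
  linarith

/-- For every integer `n` with `|n| ≥ 2`, the Baumslag–Solitar group `BS(1,n)` is not
polycyclic; indeed, the kernel of the homomorphism `BS(1,n) → ℤ` sending `a ↦ 0` and `b ↦ 1`
is a subgroup of `BS(1,n)` that is not finitely generated, whereas every subgroup of a
polycyclic group is finitely generated. -/
theorem baumslagSolitar_not_polycyclic (n : ℤ) (hn : 2 ≤ |n|) :
    ¬ IsPolycyclic (PresentedGroup (bsRel n)) ∧
    (∃ φ : PresentedGroup (bsRel n) →* Multiplicative ℤ,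
      φ (PresentedGroup.of 0) = Multiplicative.ofAdd (0 : ℤ) ∧
      φ (PresentedGroup.of 1) = Multiplicative.ofAdd (1 : ℤ) ∧
      ¬ φ.ker.FG) ∧
    (∀ (G : Type) [Group G], IsPolycyclic G → ∀ H : Subgroup G, H.FG) := by
  have hnz : n ≠ 0 := by rintro rfl; simp at hn
  have hn0 : (n : ℚ) ≠ 0 := Int.cast_ne_zero.mpr hnz
  have part3 : ∀ (G : Type) [Group G], IsPolycyclic G → ∀ H : Subgroup G, H.FG :=
    fun G _ h H => polycyclic_fg h H
  have hker := bs_ker_not_fg n hn hn0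
  refine ⟨fun hpoly => hker (part3 _ hpoly _), ⟨bsPhi n hn0, ?_, ?_, hker⟩, part3⟩
  · simp [bsPhi]
  · simp [bsPhi]
end

section
/- Let α be the automorphism of ℤ² given by the matrix ((2,1),(1,1)), and let G = ℤ² ⋊_α ℤ be the corresponding semidirect product. Then G is polycyclic, and G has exponential growth: there exist a finite generating set S of G with 1 ∈ S and S = S⁻¹, and a real number c > 1, such that for every k ∈ ℕ the product set Sᵏ = {s₁s₂⋯sₖ : sᵢ ∈ S} has cardinality at least cᵏ. -/
open Pointwise

namespace PolyGrowthAux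

def Ff : ℕ → ℤ × ℤ
  | 0 => (1, 0)
  | n+1 => (2 * (Ff n).1 + (Ff n).2, (Ff n).1 + (Ff n).2)

lemma Ff_pos : ∀ n, 1 ≤ (Ff n).1 ∧ 0 ≤ (Ff n).2 := by
  intro n
  induction n with
  | zero => simp [Ff]
  | succ n ih => simp only [Ff]; constructor <;> omega

lemma Ff_super : ∀ n, (∑ i ∈ Finset.range n, (Ff i).1) < (Ff n).1 := by
  intro n
  induction n with
  | zero => simp [Ff]
  | succ n ih =>
    rw [Finset.sum_range_succ]
    have := Ff_pos n
    simp only [Ff]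
    omega

def sB (n : ℕ) (ε : Fin n → Bool) : ℤ := ∑ i, if ε i then (Ff i).1 else 0

lemma sB_le (n : ℕ) (ε : Fin n → Bool) : sB n ε ≤ ∑ i ∈ Finset.range n, (Ff i).1 := by
  rw [sB, Finset.sum_range fun i => (Ff i).1]
  apply Finset.sum_le_sum
  intro i _
  have := Ff_pos (i : ℕ)
  split <;> omega

lemma sB_nonneg (n : ℕ) (ε : Fin n → Bool) : 0 ≤ sB n ε := by
  apply Finset.sum_nonneg
  intro i _
  have := Ff_pos (i : ℕ)
  split <;> omega

lemma sB_succ (n : ℕ) (ε : Fin (n+1) → Bool) :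
    sB (n+1) ε = sB n (ε ∘ Fin.castSucc) + (if ε (Fin.last n) then (Ff n).1 else 0) := by
  rw [sB, sB, Fin.sum_univ_castSucc]
  rfl

lemma sB_inj : ∀ n, Function.Injective (sB n) := by
  intro n
  induction n with
  | zero => intro ε ε' _; funext i; exact absurd i.2 (by omega)
  | succ n ih =>
    intro ε ε' h
    rw [sB_succ, sB_succ] at h
    have hlast : ε (Fin.last n) = ε' (Fin.last n) := by
      by_contra hne
      have h1 := sB_le n (ε ∘ Fin.castSucc)
      have h2 := sB_le n (ε' ∘ Fin.castSucc)
      have h3 := sB_nonneg n (ε ∘ Fin.castSucc)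
      have h4 := sB_nonneg n (ε' ∘ Fin.castSucc)
      have h5 := Ff_super n
      rcases Bool.eq_false_or_eq_true (ε (Fin.last n)) with hb | hb <;>
        rcases Bool.eq_false_or_eq_true (ε' (Fin.last n)) with hb' | hb' <;>
          simp [hb, hb'] at h hne <;> omega
    rw [hlast] at h
    have := ih (by linarith : sB n (ε ∘ Fin.castSucc) = sB n (ε' ∘ Fin.castSucc))
    funext i
    rcases Fin.eq_castSucc_or_eq_last i with ⟨j, rfl⟩ | rfl
    · exact congrFun this j
    · exact hlast

def sV (n : ℕ) (ε : Fin n → Bool) : ℤ × ℤ := ∑ i, if ε i then Ff i else 0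

lemma sV_fst (n : ℕ) (ε : Fin n → Bool) : (sV n ε).1 = sB n ε := by
  rw [sV, sB, Prod.fst_sum]
  apply Finset.sum_congr rfl
  intro i _
  exact apply_ite Prod.fst _ _ _

lemma sV_inj (n : ℕ) : Function.Injective (sV n) := by
  intro ε ε' h
  exact sB_inj n (by rw [← sV_fst, ← sV_fst, h])

lemma sV_succ (n : ℕ) (ε : Fin (n+1) → Bool) :
    sV (n+1) ε = sV n (ε ∘ Fin.castSucc) + (if ε (Fin.last n) then Ff n else 0) := by
  rw [sV, sV, Fin.sum_univ_castSucc]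
  rfl

section Grp

variable (α : (ℤ × ℤ) ≃+ (ℤ × ℤ))
    (hα : ∀ v : ℤ × ℤ, α v = (2 * v.1 + v.2, v.1 + v.2))
    (φ : Multiplicative ℤ →* MulAut (Multiplicative (ℤ × ℤ)))
    (hφ : ∀ v : ℤ × ℤ, φ (Multiplicative.ofAdd (1 : ℤ)) (Multiplicative.ofAdd v) =
      Multiplicative.ofAdd (α v))

local notation "G" => SemidirectProduct (Multiplicative (ℤ × ℤ)) (Multiplicative ℤ) φ

def gt' : G := SemidirectProduct.inr (Multiplicative.ofAdd 1)
def ga : G := SemidirectProduct.inl (Multiplicative.ofAdd ((1:ℤ), (0:ℤ)))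
def gb : G := SemidirectProduct.inl (Multiplicative.ofAdd ((0:ℤ), (1:ℤ)))

lemma ga_zpow (m : ℤ) : (ga φ) ^ m = SemidirectProduct.inl (Multiplicative.ofAdd ((m:ℤ), (0:ℤ))) := by
  rw [ga, ← map_zpow]
  congr 1
  rw [← ofAdd_zsmul]
  congr 1
  simp

lemma gb_zpow (m : ℤ) : (gb φ) ^ m = SemidirectProduct.inl (Multiplicative.ofAdd ((0:ℤ), (m:ℤ))) := by
  rw [gb, ← map_zpow]
  congr 1
  rw [← ofAdd_zsmul]
  congr 1
  simp

lemma gt'_zpow (m : ℤ) : (gt' φ) ^ m = SemidirectProduct.inr (Multiplicative.ofAdd m) := by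
  rw [gt', ← map_zpow]
  congr 1
  rw [← ofAdd_zsmul]
  simp

lemma inl_eq_pow (v : ℤ × ℤ) :
    (SemidirectProduct.inl (Multiplicative.ofAdd v) : G) = (ga φ) ^ v.1 * (gb φ) ^ v.2 := by
  rw [ga_zpow, gb_zpow, ← map_mul, ← ofAdd_add]
  have : (v.1, (0:ℤ)) + ((0:ℤ), v.2) = v := by ext <;> simp
  rw [this]

include hφ hα in
lemma phi_Ff : ∀ n : ℕ, φ (Multiplicative.ofAdd (n : ℤ)) (Multiplicative.ofAdd ((1:ℤ),(0:ℤ)))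
    = Multiplicative.ofAdd (Ff n) := by
  intro n
  induction n with
  | zero => simp [Ff]
  | succ n ih =>
    have : ((n+1 : ℕ) : ℤ) = 1 + (n : ℤ) := by push_cast; ring
    rw [this, ofAdd_add, map_mul]
    have : (φ (Multiplicative.ofAdd (1:ℤ)) * φ (Multiplicative.ofAdd (n:ℤ)))
        (Multiplicative.ofAdd ((1:ℤ),(0:ℤ)))
        = φ (Multiplicative.ofAdd (1:ℤ)) (φ (Multiplicative.ofAdd (n:ℤ))
          (Multiplicative.ofAdd ((1:ℤ),(0:ℤ)))) := rfl
    rw [this, ih, hφ, hα]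
    rfl

/-- words: `a^{ε₀} t a^{ε₁} t ⋯ a^{ε_{n-1}} t` -/
def wu : (n : ℕ) → (Fin n → Bool) → G
  | 0, _ => 1
  | n+1, ε => wu n (ε ∘ Fin.castSucc) *
      ((if ε (Fin.last n) then ga φ else 1) * gt' φ)

include hφ hα in
lemma wu_val : ∀ n (ε : Fin n → Bool),
    wu φ n ε = ⟨Multiplicative.ofAdd (sV n ε), Multiplicative.ofAdd (n : ℤ)⟩ := by
  intro n
  induction n with
  | zero =>
    intro ε
    ext <;> simp [wu, sV]
  | succ n ih =>
    intro ε
    rw [wu, ih]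
    have hx : ((if ε (Fin.last n) then ga φ else 1) * gt' φ : G)
        = ⟨Multiplicative.ofAdd (if ε (Fin.last n) then ((1:ℤ),(0:ℤ)) else 0),
            Multiplicative.ofAdd (1:ℤ)⟩ := by
      split <;> ext <;> simp [ga, gt']
    rw [hx]
    refine SemidirectProduct.ext ?_ ?_
    · show Multiplicative.ofAdd (sV n (ε ∘ Fin.castSucc)) *
        φ (Multiplicative.ofAdd (n:ℤ)) (Multiplicative.ofAdd _) = _
      split
      · rw [phi_Ff α hα φ hφ]
        show Multiplicative.ofAdd (sV n (ε ∘ Fin.castSucc) + Ff n) = Multiplicative.ofAdd _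
        congr 1
        rw [sV, sV, Fin.sum_univ_castSucc]
        simp [*]
      · rename_i hb
        show Multiplicative.ofAdd (sV n (ε ∘ Fin.castSucc)) *
          φ (Multiplicative.ofAdd (n:ℤ)) 1 = _
        rw [map_one, mul_one]
        congr 1
        rw [sV, sV, Fin.sum_univ_castSucc]
        simp [hb]
    · show Multiplicative.ofAdd (n:ℤ) * Multiplicative.ofAdd (1:ℤ) = _
      rw [← ofAdd_add]
      congr 1

/-- odd-length words -/
def wuo (n : ℕ) (ε : Fin (n+1) → Bool) : G :=
  wu φ n (ε ∘ Fin.castSucc) * (if ε (Fin.last n) then ga φ else 1)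

include hφ hα in
lemma wuo_val (n : ℕ) (ε : Fin (n+1) → Bool) :
    wuo φ n ε = ⟨Multiplicative.ofAdd (sV (n+1) ε), Multiplicative.ofAdd (n : ℤ)⟩ := by
  rw [wuo, wu_val α hα φ hφ]
  have hx : ((if ε (Fin.last n) then ga φ else 1) : G)
      = ⟨Multiplicative.ofAdd (if ε (Fin.last n) then ((1:ℤ),(0:ℤ)) else 0),
          (1 : Multiplicative ℤ)⟩ := by
    split <;> ext <;> simp [ga]
  rw [hx]
  refine SemidirectProduct.ext ?_ ?_
  · show Multiplicative.ofAdd (sV n (ε ∘ Fin.castSucc)) *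
      φ (Multiplicative.ofAdd (n:ℤ)) (Multiplicative.ofAdd _) = _
    split
    · rw [phi_Ff α hα φ hφ]
      show Multiplicative.ofAdd (sV n (ε ∘ Fin.castSucc) + Ff n) = Multiplicative.ofAdd _
      congr 1
      rw [sV_succ]
      simp [*]
    · rename_i hb
      show Multiplicative.ofAdd (sV n (ε ∘ Fin.castSucc)) *
        φ (Multiplicative.ofAdd (n:ℤ)) 1 = _
      rw [map_one, mul_one]
      congr 1
      rw [sV_succ]
      simp [hb]
  · show Multiplicative.ofAdd (n:ℤ) * 1 = _
    rw [mul_one]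

include hφ hα in
lemma wuo_inj (n : ℕ) : Function.Injective (wuo φ n) := by
  intro ε ε' h
  rw [wuo_val α hα φ hφ, wuo_val α hα φ hφ] at h
  have : Multiplicative.ofAdd (sV (n+1) ε) = Multiplicative.ofAdd (sV (n+1) ε') :=
    congrArg SemidirectProduct.left h
  exact sV_inj (n+1) (by simpa using this)

def Sgen : Set G :=
  {1, ga φ, (ga φ)⁻¹, gb φ, (gb φ)⁻¹, gt' φ, (gt' φ)⁻¹}

lemma Sgen_finite : (Sgen φ).Finite := by
  apply Set.Finite.insert
  apply Set.Finite.insert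
  apply Set.Finite.insert
  apply Set.Finite.insert
  apply Set.Finite.insert
  apply Set.Finite.insert
  exact Set.finite_singleton _

lemma one_mem_Sgen : (1 : G) ∈ Sgen φ := Set.mem_insert _ _

lemma Sgen_inv : (Sgen φ)⁻¹ = Sgen φ := by
  ext x
  simp only [Sgen, Set.mem_inv, Set.mem_insert_iff, Set.mem_singleton_iff]
  constructor
  · rintro (h|h|h|h|h|h|h) <;>
      rw [← inv_inv x, h] <;> simp
  · rintro (rfl|rfl|rfl|rfl|rfl|rfl|rfl) <;> simp

lemma wu_mem : ∀ n (ε : Fin n → Bool), wu φ n ε ∈ (Sgen φ) ^ (2 * n) := by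
  intro n
  induction n with
  | zero => intro ε; rw [wu]; norm_num
  | succ n ih =>
    intro ε
    have h2 : 2 * (n + 1) = 2 * n + 1 + 1 := by ring
    rw [h2, pow_succ, pow_succ, wu, ← mul_assoc]
    apply Set.mul_mem_mul
    apply Set.mul_mem_mul (ih _)
    · split
      · exact Set.mem_insert_of_mem _ (Set.mem_insert _ _)
      · exact Set.mem_insert _ _
    · simp [Sgen]

lemma wuo_mem (n : ℕ) (ε : Fin (n+1) → Bool) : wuo φ n ε ∈ (Sgen φ) ^ (2 * n + 1) := by
  rw [pow_succ, wuo]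
  apply Set.mul_mem_mul (wu_mem φ n _)
  split
  · exact Set.mem_insert_of_mem _ (Set.mem_insert _ _)
  · exact Set.mem_insert _ _

lemma Sgen_pow_finite (k : ℕ) : ((Sgen φ) ^ k).Finite := by
  induction k with
  | zero => rw [pow_zero]; exact Set.finite_one
  | succ k ih => rw [pow_succ]; exact ih.mul (Sgen_finite φ)

include hφ hα in
lemma card_pow_odd (n : ℕ) : 2 ^ (n + 1) ≤ ((Sgen φ) ^ (2 * n + 1)).ncard := by
  have hsub : Set.range (wuo φ n) ⊆ (Sgen φ) ^ (2 * n + 1) := by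
    rintro _ ⟨ε, rfl⟩
    exact wuo_mem φ n ε
  have h1 : (Set.range (wuo φ n)).ncard = 2 ^ (n + 1) := by
    rw [← Nat.card_coe_set_eq, Nat.card_range_of_injective (wuo_inj α hα φ hφ n)]
    simp [Nat.card_eq_fintype_card]
  calc 2 ^ (n + 1) = (Set.range (wuo φ n)).ncard := h1.symm
    _ ≤ ((Sgen φ) ^ (2 * n + 1)).ncard :=
        Set.ncard_le_ncard hsub (Sgen_pow_finite φ _)

end Grp
end PolyGrowthAux

open PolyGrowthAux

/-- Let `α` be the automorphism of `ℤ²` given by the matrix `((2,1),(1,1))`, and let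
`G = ℤ² ⋊_α ℤ` be the corresponding semidirect product. Then `G` is polycyclic, and `G` has
exponential growth: there exist a finite generating set `S` of `G` with `1 ∈ S` and
`S = S⁻¹`, and a real number `c > 1`, such that for every `k ∈ ℕ` the product set `Sᵏ`
has cardinality at least `cᵏ`. -/
theorem semidirect_polycyclic_exponential_growth
    (α : (ℤ × ℤ) ≃+ (ℤ × ℤ))
    (hα : ∀ v : ℤ × ℤ, α v = (2 * v.1 + v.2, v.1 + v.2))
    (φ : Multiplicative ℤ →* MulAut (Multiplicative (ℤ × ℤ)))
    (hφ : ∀ v : ℤ × ℤ, φ (Multiplicative.ofAdd (1 : ℤ)) (Multiplicative.ofAdd v) =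
      Multiplicative.ofAdd (α v)) :
    IsPolycyclic (SemidirectProduct (Multiplicative (ℤ × ℤ)) (Multiplicative ℤ) φ) ∧
    ∃ S : Set (SemidirectProduct (Multiplicative (ℤ × ℤ)) (Multiplicative ℤ) φ),
      S.Finite ∧ (1 : SemidirectProduct (Multiplicative (ℤ × ℤ)) (Multiplicative ℤ) φ) ∈ S ∧
      S⁻¹ = S ∧ Subgroup.closure S = ⊤ ∧
      ∃ c : ℝ, 1 < c ∧ ∀ k : ℕ, c ^ k ≤ ((S ^ k).ncard : ℝ) := by
  set G := SemidirectProduct (Multiplicative (ℤ × ℤ)) (Multiplicative ℤ) φ with hG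
  constructor
  · -- polycyclic
    have hA12 : Subgroup.zpowers (ga φ) ≤ (SemidirectProduct.inl (φ := φ)).range := by
      rw [Subgroup.zpowers_le]
      exact ⟨Multiplicative.ofAdd ((1:ℤ),(0:ℤ)), rfl⟩
    have key0 : (⊥ : Subgroup G) ≤ Subgroup.zpowers (ga φ) ∧
        ∃ hnorm : ((⊥ : Subgroup G).subgroupOf (Subgroup.zpowers (ga φ))).Normal,
          haveI := hnorm
          IsCyclic (Subgroup.zpowers (ga φ) ⧸
            (⊥ : Subgroup G).subgroupOf (Subgroup.zpowers (ga φ))) := by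
      refine ⟨bot_le, ?_⟩
      have hnorm : ((⊥ : Subgroup G).subgroupOf (Subgroup.zpowers (ga φ))).Normal := by
        rw [Subgroup.bot_subgroupOf]; infer_instance
      refine ⟨hnorm, ?_⟩
      refine ⟨⟨QuotientGroup.mk ⟨ga φ, Subgroup.mem_zpowers _⟩, ?_⟩⟩
      intro x
      induction x using QuotientGroup.induction_on with
      | _ g =>
        obtain ⟨k, hk⟩ := g.2
        refine ⟨k, ?_⟩
        beta_reduce
        rw [← QuotientGroup.mk_zpow]
        congr 1
        exact Subtype.ext (by rw [SubgroupClass.coe_zpow]; exact hk)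
    have key1 : Subgroup.zpowers (ga φ) ≤ (SemidirectProduct.inl (φ := φ)).range ∧
        ∃ hnorm : ((Subgroup.zpowers (ga φ)).subgroupOf
            (SemidirectProduct.inl (φ := φ)).range).Normal,
          haveI := hnorm
          IsCyclic ((SemidirectProduct.inl (φ := φ)).range ⧸
            (Subgroup.zpowers (ga φ)).subgroupOf (SemidirectProduct.inl (φ := φ)).range) := by
      refine ⟨hA12, ?_⟩
      have hnorm : ((Subgroup.zpowers (ga φ)).subgroupOf
          (SemidirectProduct.inl (φ := φ)).range).Normal := by
        constructor
        intro n hn g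
        rw [Subgroup.mem_subgroupOf] at hn ⊢
        have hconj : ((g * n * g⁻¹ : _) : G) = (n : G) := by
          obtain ⟨w, hw⟩ := g.2
          obtain ⟨z, hz⟩ := hA12 hn
          push_cast
          rw [← hw, ← hz, ← map_inv, ← map_mul, ← map_mul]
          rw [mul_comm w z, mul_assoc, mul_inv_cancel, mul_one]
        rw [hconj]
        exact hn
      refine ⟨hnorm, ?_⟩
      refine ⟨⟨QuotientGroup.mk ⟨gb φ, ⟨Multiplicative.ofAdd ((0:ℤ),(1:ℤ)), rfl⟩⟩, ?_⟩⟩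
      intro x
      induction x using QuotientGroup.induction_on with
      | _ g =>
        obtain ⟨w, hw⟩ := g.2
        refine ⟨(Multiplicative.toAdd w).2, ?_⟩
        beta_reduce
        rw [← QuotientGroup.mk_zpow, QuotientGroup.eq]
        rw [Subgroup.mem_subgroupOf]
        push_cast
        show ((gb φ) ^ (Multiplicative.toAdd w).2)⁻¹ * (g : G) ∈ Subgroup.zpowers (ga φ)
        rw [← hw, gb_zpow, ← map_inv, ← map_mul]
        have : (Multiplicative.ofAdd ((0:ℤ), (Multiplicative.toAdd w).2))⁻¹ * w
            = Multiplicative.ofAdd ((Multiplicative.toAdd w).1, (0:ℤ)) := by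
          rw [← ofAdd_neg, ← ofAdd_toAdd w, ← ofAdd_add]
          congr 1
          ext <;> simp
        rw [this, ← ga_zpow]
        exact Subgroup.zpow_mem_zpowers _ _
    have key2 : (SemidirectProduct.inl (φ := φ)).range ≤ (⊤ : Subgroup G) ∧
        ∃ hnorm : (((SemidirectProduct.inl (φ := φ)).range).subgroupOf
            (⊤ : Subgroup G)).Normal,
          haveI := hnorm
          IsCyclic ((⊤ : Subgroup G) ⧸
            ((SemidirectProduct.inl (φ := φ)).range).subgroupOf (⊤ : Subgroup G)) := by
      refine ⟨le_top, ?_⟩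
      have hN : ((SemidirectProduct.inl (φ := φ)).range).Normal := by
        rw [SemidirectProduct.range_inl_eq_ker_rightHom]
        exact MonoidHom.normal_ker _
      refine ⟨hN.subgroupOf ⊤, ?_⟩
      refine ⟨⟨QuotientGroup.mk ⟨gt' φ, trivial⟩, ?_⟩⟩
      intro x
      induction x using QuotientGroup.induction_on with
      | _ g =>
        refine ⟨Multiplicative.toAdd (g : G).right, ?_⟩
        beta_reduce
        rw [← QuotientGroup.mk_zpow, QuotientGroup.eq]
        rw [Subgroup.mem_subgroupOf]
        push_cast
        show ((gt' φ) ^ (Multiplicative.toAdd (g:G).right))⁻¹ * (g : G)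
          ∈ (SemidirectProduct.inl (φ := φ)).range
        rw [SemidirectProduct.range_inl_eq_ker_rightHom, MonoidHom.mem_ker, map_mul, map_inv,
          gt'_zpow, SemidirectProduct.rightHom_inr, SemidirectProduct.rightHom_eq_right]
        simp
    refine ⟨3, ![⊥, Subgroup.zpowers (ga φ), (SemidirectProduct.inl).range, ⊤], rfl, rfl, ?_⟩
    intro i
    fin_cases i
    · exact key0
    · exact key1
    · exact key2
  · -- growth
    refine ⟨Sgen φ, Sgen_finite φ, one_mem_Sgen φ, Sgen_inv φ, ?_, ?_⟩
    · -- generates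
      rw [eq_top_iff]
      intro g _
      rw [← SemidirectProduct.inl_left_mul_inr_right g]
      apply mul_mem
      · rw [← ofAdd_toAdd g.left, inl_eq_pow]
        apply mul_mem
        · exact zpow_mem (Subgroup.subset_closure (by simp [Sgen])) _
        · exact zpow_mem (Subgroup.subset_closure (by simp [Sgen])) _
      · rw [← ofAdd_toAdd g.right, ← gt'_zpow]
        exact zpow_mem (Subgroup.subset_closure (by simp [Sgen])) _
    · refine ⟨Real.sqrt 2, ?_, ?_⟩
      · rw [show (1:ℝ) = Real.sqrt 1 by simp]
        exact Real.sqrt_lt_sqrt (by norm_num) (by norm_num)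
      · intro k
        rcases Nat.eq_zero_or_pos k with rfl | hk
        · rw [pow_zero, pow_zero, ← Set.singleton_one, Set.ncard_singleton]
          norm_num
        · set n := (k - 1) / 2 with hn
          have h1 : 2 * n + 1 ≤ k := by omega
          have h2 : k ≤ 2 * (n + 1) := by omega
          have hs1 : (1:ℝ) ≤ Real.sqrt 2 := by
            rw [show (1:ℝ) = Real.sqrt 1 by simp]
            exact Real.sqrt_le_sqrt (by norm_num)
          calc Real.sqrt 2 ^ k ≤ Real.sqrt 2 ^ (2 * (n+1)) := by
                apply pow_le_pow_right₀ hs1 h2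
            _ = 2 ^ (n+1) := by
                rw [pow_mul, Real.sq_sqrt (by norm_num : (0:ℝ) ≤ 2)]
            _ ≤ (((Sgen φ) ^ (2*n+1)).ncard : ℝ) := by
                exact_mod_cast card_pow_odd α hα φ hφ n
            _ ≤ (((Sgen φ) ^ k).ncard : ℝ) := by
                exact_mod_cast Set.ncard_le_ncard
                  (Set.pow_subset_pow_right (one_mem_Sgen φ) h1) (Sgen_pow_finite φ k)
end
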